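/- Let a > 0 be an irrational real number, and for an integer k ≥ 2 set N_a(k) := min( π²·⌈a·k/(a+1)⌉²/a² , π²·⌈k/(a+1)⌉² ) and c_a(k) := (N_a(k) − π²·k²/(a+1)²)/k. Then the set of cluster points of the sequence (c_a(k))_{k≥2} (i.e. the set of real numbers x such that some subsequence of (c_a(k)) converges to x) is exactly the closed interval [0, 2π²/(a+1)²]. -/

import Mathlib

open Real Filter

/-- step lemma: multiples of small positive `g` hit any subinterval, with large index. -/
lemma stmt5_stepC (g u v : ℝ) (hg0 : 0 < g) (hguv : g ≤ (v - u) / 2) (hu : 0 ≤ u) (hv : v ≤ 1)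
    (K : ℕ) : ∃ j : ℕ, K ≤ j ∧ Int.fract ((j : ℝ) * g) ∈ Set.Ioo u v := by
  have huv : u < v := by linarith
  set t : ℝ := (u + v) / 2 with htdef
  have ht0 : 0 ≤ t := by simp [htdef]; linarith
  have hg1 : g ≤ 1 := by linarith
  set j0 : ℤ := ⌊(t + K) / g⌋ with hj0def
  have hK0 : (0:ℝ) ≤ (K:ℝ) := Nat.cast_nonneg K
  have hKj0 : (K : ℤ) ≤ j0 := by
    rw [hj0def, Int.le_floor]
    push_cast
    rw [le_div_iff₀ hg0]
    nlinarith
  have hj0nn : (0:ℤ) ≤ j0 := le_trans (by positivity) hKj0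
  have hfl : (j0 : ℝ) ≤ (t + K) / g := Int.floor_le _
  have hfl2 : (t + K) / g < (j0 : ℝ) + 1 := Int.lt_floor_add_one _
  have h1 : (j0 : ℝ) * g ≤ t + K := (le_div_iff₀ hg0).mp hfl
  have h2 : t + K < ((j0 : ℝ) + 1) * g := (div_lt_iff₀ hg0).mp hfl2
  refine ⟨j0.toNat, by omega, ?_⟩
  have hjcast : ((j0.toNat : ℕ) : ℝ) = (j0 : ℝ) := by exact_mod_cast Int.toNat_of_nonneg hj0nn
  rw [hjcast]
  have hw1 : u < (j0:ℝ) * g - K := by nlinarith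
  have hw2 : (j0:ℝ) * g - K ≤ t := by linarith
  have : Int.fract ((j0:ℝ) * g) = Int.fract ((j0:ℝ) * g - ((K:ℤ):ℝ)) := by
    rw [Int.fract_sub_intCast]
  rw [this]
  have hcst : (((K:ℤ)):ℝ) = (K:ℝ) := by push_cast; ring
  rw [hcst]
  rw [Int.fract_eq_self.mpr ⟨by linarith, by simp [htdef] at hw2 ⊢; linarith⟩]
  exact ⟨hw1, by simp [htdef] at hw2 ⊢; linarith⟩

/-- density of the orbit of an irrational rotation, frequently in `atTop`. -/
lemma stmt5_dense (α : ℝ) (hα : Irrational α) (u v : ℝ) (hu : 0 < u) (huv : u < v) (hv : v < 1) :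
    ∃ᶠ n : ℕ in atTop, Int.fract (α * n) ∈ Set.Ioo u v := by
  set δ : ℝ := min (1/2) ((v - u)/2) with hδdef
  have hδ0 : 0 < δ := lt_min (by norm_num) (by linarith)
  set S := AddSubgroup.closure ({α, (1:ℝ)} : Set ℝ) with hSdef
  have hdense : Dense (S : Set ℝ) := by
    rcases S.dense_or_cyclic with h | ⟨b, hb⟩
    · exact h
    exfalso
    have hαS : α ∈ S := AddSubgroup.subset_closure (by simp)
    have h1S : (1:ℝ) ∈ S := AddSubgroup.subset_closure (by simp)
    rw [hb, AddSubgroup.mem_closure_singleton] at hαS h1S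
    obtain ⟨m, hm⟩ := hαS
    obtain ⟨n, hn⟩ := h1S
    have hn0 : n ≠ 0 := by rintro rfl; simp at hn
    apply hα
    refine ⟨(m : ℚ) / (n : ℚ), ?_⟩
    have hnR : ((n:ℚ):ℝ) ≠ 0 := by exact_mod_cast (by exact_mod_cast hn0 : ((n:ℚ)) ≠ 0)
    push_cast
    rw [zsmul_eq_mul] at hm hn
    have hnR' : (n:ℝ) ≠ 0 := by exact_mod_cast hn0
    rw [div_eq_iff hnR']
    linear_combination (n:ℝ) * hm - (m:ℝ) * hn
  obtain ⟨g, hgS, hg0, hgδ⟩ : ∃ g ∈ S, g ∈ Set.Ioo 0 δ := by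
    obtain ⟨g, hgS, hg⟩ := dense_iff_exists_between.mp hdense 0 δ hδ0
    exact ⟨g, hgS, hg⟩
  rw [hSdef, AddSubgroup.mem_closure_pair] at hgS
  obtain ⟨m, n, hmn⟩ := hgS
  rw [zsmul_eq_mul, zsmul_eq_mul, mul_one] at hmn
  have hm0 : m ≠ 0 := by
    rintro rfl
    rw [Int.cast_zero, zero_mul, zero_add] at hmn
    have h1 : (0:ℝ) < (n:ℝ) := hmn ▸ hg0
    have h2 : (n:ℝ) < 1 := by
      have := hgδ; rw [← hmn] at this
      calc (n:ℝ) < δ := this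
        _ ≤ 1/2 := min_le_left _ _
        _ < 1 := by norm_num
    have h1' : 0 < n := by exact_mod_cast h1
    have h2' : n < 1 := by exact_mod_cast h2
    omega
  have hgirr : Irrational g := by
    rw [← hmn]
    exact (hα.intCast_mul hm0).add_intCast n
  have hgvu : g ≤ (v - u) / 2 := le_of_lt (lt_of_lt_of_le hgδ (min_le_right _ _))
  rw [frequently_atTop]
  intro K
  rcases hm0.lt_or_gt with hmneg | hmpos
  · -- m < 0
    obtain ⟨j, hjK, hj⟩ := stmt5_stepC g (1 - v) (1 - u) hg0 (by linarith) (by linarith)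
      (by linarith) (max K 1)
    have hj1 : 1 ≤ j := le_trans (le_max_right _ _) hjK
    refine ⟨j * (-m).toNat, ?_, ?_⟩
    · calc K ≤ j := le_trans (le_max_left _ _) hjK
        _ ≤ j * (-m).toNat := Nat.le_mul_of_pos_right _ (by omega)
    · have hmt : (((-m).toNat : ℕ) : ℝ) = -(m:ℝ) := by
        have : ((-m).toNat : ℤ) = -m := Int.toNat_of_nonneg (by omega)
        exact_mod_cast this
      have harg : α * ((j * (-m).toNat : ℕ) : ℝ) = ((j:ℤ) * n : ℤ) + (-(((j:ℝ)) * g)) := by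
        push_cast [hmt]
        rw [← hmn]; ring
      rw [harg, Int.fract_intCast_add]
      have hne : Int.fract ((j:ℝ) * g) ≠ 0 := by
        have hjg : Irrational ((j:ℕ) * g) := hgirr.natCast_mul (by omega)
        intro h0
        have hfl := Int.floor_add_fract ((j:ℝ) * g)
        rw [h0, add_zero] at hfl
        exact hjg.ne_int _ hfl.symm
      rw [Int.fract_neg hne]
      obtain ⟨hl, hr⟩ := hj
      exact ⟨by linarith, by linarith⟩
  · -- m > 0
    obtain ⟨j, hjK, hj⟩ := stmt5_stepC g u v hg0 hgvu hu.le hv.le K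
    refine ⟨j * m.toNat, ?_, ?_⟩
    · calc K ≤ j := hjK
        _ ≤ j * m.toNat := Nat.le_mul_of_pos_right _ (by omega)
    · have hmt : ((m.toNat : ℕ) : ℝ) = (m:ℝ) := by
        have : (m.toNat : ℤ) = m := Int.toNat_of_nonneg (by omega)
        exact_mod_cast this
      have harg : α * ((j * m.toNat : ℕ) : ℝ) = (j:ℝ) * g - ((j:ℤ) * n : ℤ) := by
        push_cast [hmt]
        rw [← hmn]; ring
      rw [harg, Int.fract_sub_intCast]
      exact hj


set_option maxHeartbeats 1000000 in
/-- Irrational case of Theorem 6.6: the cluster points of `(c_a(k))_{k≥2}` form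
exactly the interval `[0, 2π²/(a+1)²]`. -/
theorem stmt5 (a : ℝ) (ha : 0 < a) (hirr : Irrational a)
    (N c : ℤ → ℝ)
    (hN : ∀ k : ℤ, N k = min (π ^ 2 * ((⌈a * (k : ℝ) / (a + 1)⌉ : ℝ)) ^ 2 / a ^ 2)
        (π ^ 2 * ((⌈(k : ℝ) / (a + 1)⌉ : ℝ)) ^ 2))
    (hc : ∀ k : ℤ, c k = (N k - π ^ 2 * (k : ℝ) ^ 2 / (a + 1) ^ 2) / (k : ℝ)) :
    {x : ℝ | MapClusterPt x atTop (fun n : ℕ => c ((n : ℤ) + 2))}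
      = Set.Icc 0 (2 * π ^ 2 / (a + 1) ^ 2) := by
  have ha1 : (0:ℝ) < a + 1 := by linarith
  have hπ : (0:ℝ) < π := Real.pi_pos
  set gm : ℝ → ℝ := fun s => min ((1 - s)/a) s with hgmdef
  -- irrationality of a/(a+1)
  have hαirr : Irrational (a / (a+1)) := by
    rintro ⟨q, hq⟩
    have hq1 : (q:ℝ) ≠ 1 := by
      intro h
      rw [h] at hq
      have : a + 1 = a := by
        field_simp at hq
        exact hq
      linarith
    apply hirr
    refine ⟨q / (1 - q), ?_⟩
    have hq' : (q:ℝ) * (a+1) = a := by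
      rw [eq_div_iff ha1.ne'] at hq
      exact hq
    push_cast
    rw [div_eq_iff (sub_ne_zero.mpr (Ne.symm hq1))]
    linear_combination hq'
  have hxirr : ∀ k : ℤ, k ≠ 0 → Irrational (a * (k:ℝ) / (a+1)) := by
    intro k hk
    have : a * (k:ℝ) / (a+1) = (a/(a+1)) * (k:ℝ) := by ring
    rw [this]
    exact hαirr.mul_intCast hk
  -- bounds on gm
  have hgm_le : ∀ s : ℝ, gm s ≤ 1/(a+1) := by
    intro s
    rcases le_or_gt s (1/(a+1)) with h | h
    · exact le_trans (min_le_right _ _) h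
    · refine le_trans (min_le_left _ _) ?_
      rw [div_le_div_iff₀ ha ha1]
      nlinarith [(div_lt_iff₀ ha1).mp h]
  have hgm_nonneg : ∀ s : ℝ, 0 ≤ s → s ≤ 1 → 0 ≤ gm s := by
    intro s h0 h1
    exact le_min (div_nonneg (by linarith) ha.le) h0
  -- key formula
  have hkey : ∀ k : ℤ, 2 ≤ k →
      c k = 2*π^2/(a+1) * gm (Int.fract (a * (k:ℝ) / (a+1)))
        + π^2 * (gm (Int.fract (a * (k:ℝ)/(a+1))))^2 / (k:ℝ) := by
    intro k hk
    have hk0 : (0:ℝ) < (k:ℝ) := by exact_mod_cast lt_of_lt_of_le (by norm_num) hk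
    set x := a * (k:ℝ) / (a+1) with hxdef
    set s := Int.fract x with hsdef
    have hxi : Irrational x := hxirr k (by omega)
    have hs_ne : s ≠ 0 := by
      intro h
      have hfl := Int.floor_add_fract x
      rw [← hsdef, h, add_zero] at hfl
      exact hxi.ne_int _ hfl.symm
    have hs0 : 0 < s := (Int.fract_nonneg x).lt_of_ne (Ne.symm hs_ne)
    have hs1 : s < 1 := Int.fract_lt_one x
    have hy : (k:ℝ)/(a+1) = (k:ℝ) - x := by
      rw [hxdef]; field_simp; ring
    have hfy : Int.fract ((k:ℝ)/(a+1)) = 1 - s := by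
      rw [hy, sub_eq_add_neg, Int.fract_intCast_add, Int.fract_neg hs_ne]
    have hceil1 : (⌈x⌉:ℝ) = x + (1 - s) := by
      have := Int.ceil_sub_self_eq hs_ne
      rw [← hsdef] at this
      linarith
    have hfy_ne : Int.fract ((k:ℝ)/(a+1)) ≠ 0 := by
      rw [hfy]; exact (by linarith : (0:ℝ) < 1 - s).ne'
    have hceil2 : (⌈(k:ℝ)/(a+1)⌉:ℝ) = (k:ℝ)/(a+1) + s := by
      have := Int.ceil_sub_self_eq hfy_ne
      rw [hfy] at this
      linarith
    set y := (k:ℝ)/(a+1) with hydef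
    have hy0 : 0 < y := by rw [hydef]; positivity
    have hA : π^2 * ((⌈x⌉:ℝ))^2 / a^2 = π^2 * (y + (1-s)/a)^2 := by
      rw [hceil1]
      have hxy : x = a * y := by rw [hxdef, hydef]; field_simp
      rw [hxy]
      field_simp
    have hB : π^2 * ((⌈y⌉:ℝ))^2 = π^2 * (y + s)^2 := by rw [hceil2]
    have h1 : 0 ≤ y + (1-s)/a := by
      have : 0 < (1-s)/a := div_pos (by linarith) ha
      linarith
    have h2 : 0 ≤ y + s := by linarith
    have hmin : min (π^2 * (y + (1-s)/a)^2) (π^2 * (y+s)^2) = π^2 * (y + gm s)^2 := by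
      rcases le_total ((1-s)/a) s with h | h
      · have hg : gm s = (1-s)/a := min_eq_left h
        rw [hg, min_eq_left]
        exact mul_le_mul_of_nonneg_left (pow_le_pow_left₀ h1 (by linarith) 2) (by positivity)
      · have hg : gm s = s := min_eq_right h
        rw [hg, min_eq_right]
        exact mul_le_mul_of_nonneg_left (pow_le_pow_left₀ h2 (by linarith) 2) (by positivity)
    have hNk : N k = π^2 * (y + gm s)^2 := by
      rw [hN k, ← hxdef, ← hydef, hA, hB, hmin]
    rw [hc k, hNk]
    have hky : π^2 * (k:ℝ)^2/(a+1)^2 = π^2 * y^2 := by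
      rw [hydef]; field_simp
    rw [hky, hydef]
    field_simp
    ring
  -- bounds on c
  have hbounds : ∀ n : ℕ, 0 ≤ c ((n:ℤ)+2) ∧
      c ((n:ℤ)+2) ≤ 2*π^2/(a+1)^2 + π^2 * (1/(a+1))^2 / ((n:ℝ)+2) := by
    intro n
    have hkeyn := hkey ((n:ℤ)+2) (by omega)
    rw [show ((((n:ℤ)+2 : ℤ)):ℝ) = (n:ℝ)+2 from by push_cast; ring] at hkeyn
    set s := Int.fract (a * ((n:ℝ)+2)/(a+1)) with hs
    have hg0 : 0 ≤ gm s := hgm_nonneg s (Int.fract_nonneg _) (Int.fract_lt_one _).le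
    have hgle : gm s ≤ 1/(a+1) := hgm_le s
    have hn2 : (0:ℝ) < (n:ℝ)+2 := by positivity
    constructor
    · rw [hkeyn]
      apply add_nonneg
      · exact mul_nonneg (by positivity) hg0
      · exact div_nonneg (mul_nonneg (by positivity) (sq_nonneg _)) hn2.le
    · rw [hkeyn]
      have h1 : 2*π^2/(a+1) * gm s ≤ 2*π^2/(a+1) * (1/(a+1)) :=
        mul_le_mul_of_nonneg_left hgle (by positivity)
      have h2 : π^2 * (gm s)^2/((n:ℝ)+2) ≤ π^2 * (1/(a+1))^2/((n:ℝ)+2) := by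
        exact (div_le_div_iff_of_pos_right hn2).mpr
          (mul_le_mul_of_nonneg_left (pow_le_pow_left₀ hg0 hgle 2) (by positivity))
      have h3 : 2*π^2/(a+1) * (1/(a+1)) = 2*π^2/(a+1)^2 := by
        field_simp
      linarith
  set M := 2*π^2/(a+1)^2 with hMdef
  ext x
  simp only [Set.mem_setOf_eq, Set.mem_Icc]
  constructor
  · intro hx
    rw [mapClusterPt_iff_frequently] at hx
    constructor
    · by_contra h
      push_neg at h
      obtain ⟨n, hn⟩ := (hx (Set.Iio 0) (Iio_mem_nhds h)).exists
      exact absurd (hbounds n).1 (by simpa using hn)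
    · by_contra h
      push_neg at h
      have hMx : M < x := h
      set D := (x - M)/2 with hDdef
      have hD0 : 0 < D := by rw [hDdef]; linarith
      have hev : ∀ᶠ n : ℕ in atTop, c ((n:ℤ)+2) ≤ (M + x)/2 := by
        obtain ⟨N0, hN0⟩ := exists_nat_gt (π^2 * (1/(a+1))^2 / D)
        rw [eventually_atTop]
        refine ⟨N0, fun n hn => ?_⟩
        have hn2 : (0:ℝ) < (n:ℝ)+2 := by positivity
        have hle : π^2 * (1/(a+1))^2 / D < (n:ℝ)+2 := by
          calc π^2 * (1/(a+1))^2 / D < (N0:ℝ) := hN0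
            _ ≤ (n:ℝ) := by exact_mod_cast hn
            _ ≤ (n:ℝ)+2 := by linarith
        have htail : π^2 * (1/(a+1))^2 / ((n:ℝ)+2) < D := by
          rw [div_lt_iff₀ hn2]
          have := (div_lt_iff₀ hD0).mp hle
          nlinarith
        have := (hbounds n).2
        rw [hDdef] at htail
        linarith
      have hfreq : ∃ᶠ n : ℕ in atTop, c ((n:ℤ)+2) ∈ Set.Ioi ((M+x)/2) :=
        hx (Set.Ioi ((M+x)/2)) (Ioi_mem_nhds (by linarith))
      obtain ⟨n, hn1, hn2⟩ := (hfreq.and_eventually hev).exists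
      simp only [Set.mem_Ioi] at hn1
      linarith
  · rintro ⟨hx0, hxM⟩
    rw [mapClusterPt_iff_frequently]
    intro U hU
    obtain ⟨ε, εpos, hball⟩ := Metric.mem_nhds_iff.mp hU
    suffices h : ∃ᶠ n : ℕ in atTop, |c ((n:ℤ)+2) - x| < ε by
      refine h.mono fun n hn => hball ?_
      rwa [Metric.mem_ball, Real.dist_eq]
    set L := max (1/a) 1 with hLdef
    have hL1 : (1:ℝ) ≤ L := le_max_right _ _
    have hL0 : (0:ℝ) < L := by linarith
    set m₀ := x * (a+1)/(2*π^2) with hm₀def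
    have hm₀x : 2*π^2/(a+1) * m₀ = x := by
      rw [hm₀def]; field_simp
    have hm₀0 : 0 ≤ m₀ := by
      rw [hm₀def]
      exact div_nonneg (mul_nonneg hx0 ha1.le) (by positivity)
    have hm₀1 : m₀ ≤ 1/(a+1) := by
      have h2 : x * (a+1)^2 ≤ 2*π^2 := (le_div_iff₀ (by positivity)).mp hxM
      rw [hm₀def, div_le_div_iff₀ (by positivity) ha1]
      nlinarith
    have hm₀a1 : m₀ * (a+1) ≤ 1 := (le_div_iff₀ ha1).mp hm₀1
    have hgm_m₀ : gm m₀ = m₀ := by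
      apply min_eq_right
      rw [le_div_iff₀ ha]
      nlinarith
    have hgm_lip : ∀ p q : ℝ, |gm p - gm q| ≤ L * |p - q| := by
      intro p q
      have h1 : |(1-p)/a - (1-q)/a| = |p - q| / a := by
        have he : (1-p)/a - (1-q)/a = (q-p)/a := by ring
        rw [he, abs_div, abs_of_pos ha, abs_sub_comm]
      calc |gm p - gm q| ≤ max (|(1-p)/a - (1-q)/a|) (|p - q|) :=
            abs_min_sub_min_le_max _ _ _ _
        _ ≤ L * |p - q| := by
            apply max_le
            · rw [h1]
              have he : |p-q|/a = (1/a) * |p-q| := by ring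
              rw [he]
              exact mul_le_mul_of_nonneg_right (le_max_left _ _) (abs_nonneg _)
            · exact le_mul_of_one_le_left (abs_nonneg _) hL1
    set δ := min (ε*(a+1)/(16*π^2*L)) (a/(4*(a+1))) with hδdef
    have hδ0 : 0 < δ := lt_min (by positivity) (by positivity)
    have hδ1 : δ ≤ ε*(a+1)/(16*π^2*L) := min_le_left _ _
    have hδ2 : δ ≤ a/(4*(a+1)) := min_le_right _ _
    set u := m₀ + δ/2 with hudef
    set v := m₀ + 3*δ/2 with hvdef
    have hu0 : 0 < u := by rw [hudef]; linarith
    have huv : u < v := by rw [hudef, hvdef]; linarith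
    have hv1 : v < 1 := by
      have hδa : 3*δ/2 < a/(a+1) := by
        have : a/(4*(a+1)) < a/(a+1) * (2/3) := by
          rw [div_lt_iff₀ (by positivity)]
          have : a/(a+1) * (2/3) * (4*(a+1)) = a * (8/3) := by field_simp; ring
          rw [this]
          linarith
        nlinarith
      have h1a : 1/(a+1) + a/(a+1) = 1 := by
        rw [← add_div, add_comm, div_self ha1.ne']
      rw [hvdef]
      linarith [hm₀1]
    have hfreq := stmt5_dense (a/(a+1)) hαirr u v hu0 huv hv1
    have hfreq2 : ∃ᶠ n : ℕ in atTop,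
        Int.fract ((a/(a+1)) * ((n:ℝ)+2)) ∈ Set.Ioo u v := by
      rw [frequently_atTop] at hfreq ⊢
      intro K
      obtain ⟨n', hn', hmem⟩ := hfreq (K+2)
      refine ⟨n' - 2, by omega, ?_⟩
      have hc2 : ((n' - 2 : ℕ):ℝ) + 2 = (n':ℝ) := by
        have : (2:ℕ) ≤ n' := by omega
        push_cast [Nat.cast_sub this]
        ring
      rw [hc2]
      exact hmem
    have hev : ∀ᶠ n : ℕ in atTop, π^2 * (1/(a+1))^2 / ((n:ℝ)+2) < ε/2 := by
      obtain ⟨N0, hN0⟩ := exists_nat_gt (π^2 * (1/(a+1))^2 / (ε/2))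
      rw [eventually_atTop]
      refine ⟨N0, fun n hn => ?_⟩
      have hn2 : (0:ℝ) < (n:ℝ)+2 := by positivity
      have hle : π^2 * (1/(a+1))^2 / (ε/2) < (n:ℝ)+2 := by
        calc π^2 * (1/(a+1))^2 / (ε/2) < (N0:ℝ) := hN0
          _ ≤ (n:ℝ) := by exact_mod_cast hn
          _ ≤ (n:ℝ)+2 := by linarith
      rw [div_lt_iff₀ hn2]
      have := (div_lt_iff₀ (by positivity : (0:ℝ) < ε/2)).mp hle
      nlinarith
    refine (hfreq2.and_eventually hev).mono fun n ⟨hmem, htail⟩ => ?_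
    have hkeyn := hkey ((n:ℤ)+2) (by omega)
    rw [show ((((n:ℤ)+2 : ℤ)):ℝ) = (n:ℝ)+2 from by push_cast; ring] at hkeyn
    rw [show a * ((n:ℝ)+2)/(a+1) = (a/(a+1)) * ((n:ℝ)+2) from by ring] at hkeyn
    set s := Int.fract ((a/(a+1)) * ((n:ℝ)+2)) with hsdef
    have hn2 : (0:ℝ) < (n:ℝ)+2 := by positivity
    have hg0 : 0 ≤ gm s := hgm_nonneg s (Int.fract_nonneg _) (Int.fract_lt_one _).le
    have hgle : gm s ≤ 1/(a+1) := hgm_le s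
    set T := π^2 * (gm s)^2 / ((n:ℝ)+2) with hTdef
    have hT0 : 0 ≤ T := by
      rw [hTdef]
      exact div_nonneg (mul_nonneg (by positivity) (sq_nonneg _)) hn2.le
    have hTlt : T < ε/2 := by
      have h2 : T ≤ π^2 * (1/(a+1))^2/((n:ℝ)+2) := by
        rw [hTdef]
        exact (div_le_div_iff_of_pos_right hn2).mpr
          (mul_le_mul_of_nonneg_left (pow_le_pow_left₀ hg0 hgle 2) (by positivity))
      linarith
    have hsm : |s - m₀| ≤ 3*δ/2 := by
      obtain ⟨hl, hr⟩ := hmem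
      rw [hudef] at hl; rw [hvdef] at hr
      rw [abs_le]
      constructor <;> linarith
    have hgsm : |gm s - m₀| ≤ L * (3*δ/2) := by
      rw [← hgm_m₀]
      calc |gm s - gm m₀| ≤ L * |s - m₀| := hgm_lip s m₀
        _ ≤ L * (3*δ/2) := mul_le_mul_of_nonneg_left hsm hL0.le
    have h16 : 16*π^2*L*δ ≤ ε*(a+1) := by
      rw [le_div_iff₀ (by positivity)] at hδ1
      linarith
    have hfirst : 2*π^2/(a+1) * |gm s - m₀| ≤ ε/2 := by
      have hstep : 2*π^2/(a+1) * |gm s - m₀| ≤ 2*π^2/(a+1) * (L * (3*δ/2)) :=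
        mul_le_mul_of_nonneg_left hgsm (by positivity)
      have hstep2 : 2*π^2/(a+1) * (L * (3*δ/2)) ≤ ε/2 := by
        rw [div_mul_eq_mul_div, div_le_iff₀ ha1]
        have hP : (0:ℝ) ≤ π^2*L*δ := by positivity
        nlinarith
      linarith
    have habs : |c ((n:ℤ)+2) - x| ≤ 2*π^2/(a+1) * |gm s - m₀| + T := by
      rw [hkeyn, ← hm₀x]
      have he : 2*π^2/(a+1) * gm s + T - 2*π^2/(a+1) * m₀
          = 2*π^2/(a+1) * (gm s - m₀) + T := by ring
      rw [he]
      calc |2*π^2/(a+1) * (gm s - m₀) + T| ≤ |2*π^2/(a+1) * (gm s - m₀)| + |T| :=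
            abs_add_le _ _
        _ = 2*π^2/(a+1) * |gm s - m₀| + T := by
            rw [abs_mul, abs_of_pos (by positivity : (0:ℝ) < 2*π^2/(a+1)), abs_of_nonneg hT0]
    calc |c ((n:ℤ)+2) - x| ≤ 2*π^2/(a+1) * |gm s - m₀| + T := habs
      _ < ε/2 + ε/2 := by
          have := hfirst; have := hTlt
          apply add_lt_add_of_le_of_lt hfirst hTlt
      _ = ε := by ring
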